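/- For every nilpotent Lie bracket μ ∈ N and every symmetric derivation D ∈ Der(μ), tr(Ric_μ ∘ D) = 0. -/
import Mathlib


open scoped BigOperators
open Matrix

noncomputable section

/-- vectors in `ℝ^m`. -/
abbrev Vec (m : ℕ) := Fin m → ℝ

/-- bilinear-map candidates `ℝ^m × ℝ^m → ℝ^m`. -/
abbrev Bil (m : ℕ) := Vec m → Vec m → Vec m

/-- the `i`-th standard basis vector of `ℝ^m`. -/
def bvec (m : ℕ) (i : Fin m) : Vec m := Pi.single i 1

/-- `μ` is a skew-symmetric bilinear map, i.e. an element of `V = Λ²(ℝ^m)* ⊗ ℝ^m`. -/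
def IsSkewBil {m : ℕ} (μ : Bil m) : Prop :=
  (∀ Y, IsLinearMap ℝ fun X => μ X Y) ∧ (∀ X, IsLinearMap ℝ (μ X)) ∧ ∀ X Y, μ X Y = -μ Y X

/-- the Jacobi identity for `μ`. -/
def IsJacobi {m : ℕ} (μ : Bil m) : Prop :=
  ∀ X Y Z, μ (μ X Y) Z + μ (μ Y Z) X + μ (μ Z X) Y = 0

/-- iterated left multiplications `μ(X (k-1), ⋯ μ(X 0, Y))`. -/
def adPow {m : ℕ} (μ : Bil m) (X : ℕ → Vec m) : ℕ → Vec m → Vec m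
  | 0, Y => Y
  | k + 1, Y => μ (X k) (adPow μ X k Y)

/-- nilpotency of the bracket `μ`. -/
def IsNilpotentBil {m : ℕ} (μ : Bil m) : Prop :=
  ∃ k : ℕ, ∀ (X : ℕ → Vec m) (Y : Vec m), adPow μ X k Y = 0

/-- membership in the variety `N` of nilpotent Lie brackets on `ℝ^m`. -/
def NilBracket {m : ℕ} (μ : Bil m) : Prop :=
  IsSkewBil μ ∧ IsJacobi μ ∧ IsNilpotentBil μ

/-- the `GL_m(ℝ)` action `(g.μ)(X,Y) = g μ(g⁻¹X, g⁻¹Y)` on `V`. -/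
def mact {m : ℕ} (g : Matrix (Fin m) (Fin m) ℝ) (μ : Bil m) : Bil m :=
  fun X Y => g.mulVec (μ (g⁻¹.mulVec X) (g⁻¹.mulVec Y))

/-- `‖μ‖²` for the natural inner product on `V`. -/
def normSqV {m : ℕ} (μ : Bil m) : ℝ :=
  ∑ i, ∑ j, ∑ k, (μ (bvec m i) (bvec m j) k) ^ 2

/-- the Ricci operator of `(N_μ, ⟨·,·⟩)`, as a matrix:
`⟨Ric_μ X, Y⟩ = -(1/2) Σ ⟨μ(X,Xᵢ),Xⱼ⟩⟨μ(Y,Xᵢ),Xⱼ⟩ + (1/4) Σ ⟨μ(Xᵢ,Xⱼ),X⟩⟨μ(Xᵢ,Xⱼ),Y⟩`. -/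
def RicM {m : ℕ} (μ : Bil m) : Matrix (Fin m) (Fin m) ℝ :=
  Matrix.of fun x y =>
    -(1/2) * (∑ i, ∑ j, μ (bvec m x) (bvec m i) j * μ (bvec m y) (bvec m i) j)
    + (1/4) * (∑ i, ∑ j, μ (bvec m i) (bvec m j) x * μ (bvec m i) (bvec m j) y)

/-- `D` is a derivation of the bracket `μ`. -/
def IsDerivation {m : ℕ} (μ : Bil m) (D : Matrix (Fin m) (Fin m) ℝ) : Prop :=
  ∀ X Y, D.mulVec (μ X Y) = μ (D.mulVec X) Y + μ X (D.mulVec Y)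

/-- the matrix of `ad_μ X : Y ↦ μ(X,Y)`. -/
def adMat {m : ℕ} (μ : Bil m) (X : Vec m) : Matrix (Fin m) (Fin m) ℝ :=
  Matrix.of fun j i => μ X (bvec m i) j

/-- the moment-map value `M_μ = -4 Σᵢ (ad_μ Xᵢ)ᵗ(ad_μ Xᵢ) + 2 Σᵢ (ad_μ Xᵢ)(ad_μ Xᵢ)ᵗ`. -/
def Mmat {m : ℕ} (μ : Bil m) : Matrix (Fin m) (Fin m) ℝ :=
  (-4 : ℝ) • (∑ i, (adMat μ (bvec m i))ᵀ * adMat μ (bvec m i))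
    + (2 : ℝ) • (∑ i, adMat μ (bvec m i) * (adMat μ (bvec m i))ᵀ)

/-- the 2-form `ω(X,Y) = ⟨X, JY⟩`. -/
def sympForm {m : ℕ} (J : Matrix (Fin m) (Fin m) ℝ) (X Y : Vec m) : ℝ :=
  X ⬝ᵥ J.mulVec Y

/-- closedness of a 2-form `ω` with respect to the bracket `μ`:
`ω(μ(X,Y),Z) + ω(μ(Y,Z),X) + ω(μ(Z,X),Y) = 0`. -/
def IsClosedForm {m : ℕ} (ω : Vec m → Vec m → ℝ) (μ : Bil m) : Prop :=
  ∀ X Y Z, ω (μ X Y) Z + ω (μ Y Z) X + ω (μ Z X) Y = 0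

/-- membership in `Sp(n,ℝ)`: invertible and preserving `ω = ⟨·, J·⟩`. -/
def IsSymplMat {m : ℕ} (J g : Matrix (Fin m) (Fin m) ℝ) : Prop :=
  IsUnit g ∧ ∀ X Y, sympForm J (g.mulVec X) (g.mulVec Y) = sympForm J X Y

/-- membership in `GL(n,ℂ) = {g : gJ = Jg}`. -/
def IsCxMat {m : ℕ} (J g : Matrix (Fin m) (Fin m) ℝ) : Prop :=
  IsUnit g ∧ g * J = J * g

/-- the anti-complexified Ricci operator `Ric^{ac} = (1/2)(Ric + J Ric J)`. -/
def Ricac {m : ℕ} (J : Matrix (Fin m) (Fin m) ℝ) (μ : Bil m) : Matrix (Fin m) (Fin m) ℝ :=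
  (1/2 : ℝ) • (RicM μ + J * RicM μ * J)

/-- the complexified Ricci operator `Ric^{c} = (1/2)(Ric − J Ric J)`. -/
def Ricc {m : ℕ} (J : Matrix (Fin m) (Fin m) ℝ) (μ : Bil m) : Matrix (Fin m) (Fin m) ℝ :=
  (1/2 : ℝ) • (RicM μ - J * RicM μ * J)

/-- for every nilpotent Lie bracket `μ ∈ N` and every symmetric derivation
`D ∈ Der(μ)`, `tr(Ric_μ ∘ D) = 0`. -/
theorem trace_ricci_deriv (n : ℕ) (hn : 1 ≤ n) (μ : Bil n) (hμ : NilBracket μ)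
    (D : Matrix (Fin n) (Fin n) ℝ) (hDsymm : Dᵀ = D) (hDder : IsDerivation μ D) :
    Matrix.trace (RicM μ * D) = 0 := by
  classical
  obtain ⟨⟨hlin1, hlin2, hskew⟩, _hjac, _hnil⟩ := hμ
  set c : Fin n → Fin n → Fin n → ℝ := fun i j k => μ (bvec n i) (bvec n j) k with hcdef
  have hcskew : ∀ i j k, c i j k = - c j i k := by
    intro i j k
    have h := congrFun (hskew (bvec n i) (bvec n j)) k
    simpa [hcdef] using h
  -- expansion in the first argument
  have hexp : ∀ (X Y : Vec n) (l : Fin n), μ X Y l = ∑ k, X k * μ (bvec n k) Y l := by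
    intro X Y l
    have hL := hlin1 Y
    let L : Vec n →ₗ[ℝ] Vec n := IsLinearMap.mk' _ hL
    have hX : (∑ k, X k • bvec n k) = X := by
      ext t; simp [bvec, Pi.single_apply]
    have h1 : μ X Y = ∑ k, X k • μ (bvec n k) Y := by
      have h2 : L (∑ k, X k • bvec n k) = ∑ k, X k • L (bvec n k) := by
        rw [map_sum]
        exact Finset.sum_congr rfl fun k _ => L.map_smul _ _
      rw [hX] at h2
      simpa [L, IsLinearMap.mk'] using h2
    rw [h1]
    simp [Finset.sum_apply]
  have hms : ∀ (i k : Fin n), D.mulVec (bvec n i) k = D k i := by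
    intro i k; simp [bvec, Matrix.mulVec_single]
  -- derivation identity in coordinates
  have hd : ∀ i j l, (∑ k, D l k * c i j k)
      = (∑ k, D k i * c k j l) + (∑ k, D k j * c i k l) := by
    intro i j l
    have h := congrFun (hDder (bvec n i) (bvec n j)) l
    have hL : D.mulVec (μ (bvec n i) (bvec n j)) l = ∑ k, D l k * c i j k := by
      simp [Matrix.mulVec, dotProduct, hcdef]
    have hR1 : μ (D.mulVec (bvec n i)) (bvec n j) l = ∑ k, D k i * c k j l := by
      rw [hexp]
      exact Finset.sum_congr rfl fun k _ => by rw [hms i k]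
    have hR2 : μ (bvec n i) (D.mulVec (bvec n j)) l = ∑ k, D k j * c i k l := by
      have hs : μ (bvec n i) (D.mulVec (bvec n j)) l
          = - μ (D.mulVec (bvec n j)) (bvec n i) l := by
        rw [hskew (bvec n i) (D.mulVec (bvec n j))]; simp
      rw [hs, hexp, ← Finset.sum_neg_distrib]
      refine Finset.sum_congr rfl fun k _ => ?_
      rw [hms j k]
      have := hcskew i k l
      rw [this]; ring
    rw [Pi.add_apply, hL, hR1, hR2] at h
    exact h
  -- swap helpers
  have s3 : ∀ f : Fin n → Fin n → Fin n → ℝ,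
      (∑ a, ∑ b, ∑ x, f a b x) = ∑ x, ∑ a, ∑ b, f a b x := by
    intro f
    calc (∑ a, ∑ b, ∑ x, f a b x) = ∑ a, ∑ x, ∑ b, f a b x :=
          Finset.sum_congr rfl fun a _ => Finset.sum_comm
      _ = ∑ x, ∑ a, ∑ b, f a b x := Finset.sum_comm
  have s4 : ∀ f : Fin n → Fin n → Fin n → Fin n → ℝ,
      (∑ a, ∑ b, ∑ x, ∑ y, f a b x y) = ∑ x, ∑ y, ∑ a, ∑ b, f a b x y := by
    intro f
    calc (∑ a, ∑ b, ∑ x, ∑ y, f a b x y) = ∑ x, ∑ a, ∑ b, ∑ y, f a b x y :=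
          s3 fun a b x => ∑ y, f a b x y
      _ = ∑ x, ∑ y, ∑ a, ∑ b, f a b x y :=
          Finset.sum_congr rfl fun x _ => s3 fun a b y => f a b x y
  set S : ℝ := ∑ x, ∑ y, (∑ i, ∑ j, c x i j * c y i j) * D y x with hSdef
  set T : ℝ := ∑ x, ∑ y, (∑ i, ∑ j, c i j x * c i j y) * D y x with hTdef
  -- T' = A + B from the derivation identity
  have hab : (∑ i, ∑ j, ∑ l, c i j l * (∑ k, D l k * c i j k))
      = (∑ i, ∑ j, ∑ l, c i j l * (∑ k, D k i * c k j l))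
        + (∑ i, ∑ j, ∑ l, c i j l * (∑ k, D k j * c i k l)) := by
    rw [← Finset.sum_add_distrib]
    refine Finset.sum_congr rfl fun i _ => ?_
    rw [← Finset.sum_add_distrib]
    refine Finset.sum_congr rfl fun j _ => ?_
    rw [← Finset.sum_add_distrib]
    refine Finset.sum_congr rfl fun l _ => ?_
    rw [hd i j l, mul_add]
  -- T' = T
  have hT' : (∑ i, ∑ j, ∑ l, c i j l * (∑ k, D l k * c i j k)) = T := by
    have e1 : (∑ i, ∑ j, ∑ l, c i j l * (∑ k, D l k * c i j k))
        = ∑ i, ∑ j, ∑ l, ∑ k, (c i j k * c i j l) * D l k := by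
      refine Finset.sum_congr rfl fun i _ => Finset.sum_congr rfl fun j _ =>
        Finset.sum_congr rfl fun l _ => ?_
      rw [Finset.mul_sum]
      exact Finset.sum_congr rfl fun k _ => by ring
    rw [e1, s4 fun i j l k => (c i j k * c i j l) * D l k]
    rw [hTdef, Finset.sum_comm]
    refine Finset.sum_congr rfl fun l _ => Finset.sum_congr rfl fun k _ => ?_
    rw [Finset.sum_mul]
    exact Finset.sum_congr rfl fun i _ => by rw [Finset.sum_mul]
  -- A = S
  have hA : (∑ i, ∑ j, ∑ l, c i j l * (∑ k, D k i * c k j l)) = S := by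
    have e1 : (∑ i, ∑ j, ∑ l, c i j l * (∑ k, D k i * c k j l))
        = ∑ i, ∑ j, ∑ l, ∑ k, (c i j l * c k j l) * D k i := by
      refine Finset.sum_congr rfl fun i _ => Finset.sum_congr rfl fun j _ =>
        Finset.sum_congr rfl fun l _ => ?_
      rw [Finset.mul_sum]
      exact Finset.sum_congr rfl fun k _ => by ring
    rw [e1]
    have e2 : (∑ i, ∑ j, ∑ l, ∑ k, (c i j l * c k j l) * D k i)
        = ∑ i, ∑ k, ∑ j, ∑ l, (c i j l * c k j l) * D k i := by
      refine Finset.sum_congr rfl fun i _ => ?_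
      exact s3 fun j l k => (c i j l * c k j l) * D k i
    rw [e2, hSdef]
    refine Finset.sum_congr rfl fun i _ => Finset.sum_congr rfl fun k _ => ?_
    rw [Finset.sum_mul]
    exact Finset.sum_congr rfl fun j _ => by rw [Finset.sum_mul]
  -- B = S
  have hB : (∑ i, ∑ j, ∑ l, c i j l * (∑ k, D k j * c i k l)) = S := by
    have e1 : (∑ i, ∑ j, ∑ l, c i j l * (∑ k, D k j * c i k l))
        = ∑ i, ∑ j, ∑ l, ∑ k, (c j i l * c k i l) * D k j := by
      refine Finset.sum_congr rfl fun i _ => Finset.sum_congr rfl fun j _ =>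
        Finset.sum_congr rfl fun l _ => ?_
      rw [Finset.mul_sum]
      refine Finset.sum_congr rfl fun k _ => ?_
      rw [hcskew i j l, hcskew i k l]; ring
    rw [e1]
    have e2 : (∑ i, ∑ j, ∑ l, ∑ k, (c j i l * c k i l) * D k j)
        = ∑ j, ∑ k, ∑ i, ∑ l, (c j i l * c k i l) * D k j := by
      calc (∑ i, ∑ j, ∑ l, ∑ k, (c j i l * c k i l) * D k j)
          = ∑ j, ∑ i, ∑ l, ∑ k, (c j i l * c k i l) * D k j := Finset.sum_comm
        _ = ∑ j, ∑ k, ∑ i, ∑ l, (c j i l * c k i l) * D k j :=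
            Finset.sum_congr rfl fun j _ => s3 fun i l k => (c j i l * c k i l) * D k j
    rw [e2, hSdef]
    refine Finset.sum_congr rfl fun j _ => Finset.sum_congr rfl fun k _ => ?_
    rw [Finset.sum_mul]
    exact Finset.sum_congr rfl fun i _ => by rw [Finset.sum_mul]
  have key : T = 2 * S := by
    have := hab
    rw [hT', hA, hB] at this
    linarith
  -- the trace
  have htr : Matrix.trace (RicM μ * D)
      = ∑ x, ∑ y, (-(1/2) * (∑ i, ∑ j, c x i j * c y i j)
          + (1/4) * (∑ i, ∑ j, c i j x * c i j y)) * D y x := by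
    simp [Matrix.trace, Matrix.diag, Matrix.mul_apply, RicM, hcdef]
  have hsplit : (∑ x, ∑ y, (-(1/2) * (∑ i, ∑ j, c x i j * c y i j)
          + (1/4) * (∑ i, ∑ j, c i j x * c i j y)) * D y x)
      = -(1/2) * S + (1/4) * T := by
    have e1 : ∀ x y, (-(1/2) * (∑ i, ∑ j, c x i j * c y i j)
          + (1/4) * (∑ i, ∑ j, c i j x * c i j y)) * D y x
        = -(1/2) * ((∑ i, ∑ j, c x i j * c y i j) * D y x)
          + (1/4) * ((∑ i, ∑ j, c i j x * c i j y) * D y x) := by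
      intro x y; ring
    calc (∑ x, ∑ y, (-(1/2) * (∑ i, ∑ j, c x i j * c y i j)
          + (1/4) * (∑ i, ∑ j, c i j x * c i j y)) * D y x)
        = ∑ x, ∑ y, (-(1/2) * ((∑ i, ∑ j, c x i j * c y i j) * D y x)
          + (1/4) * ((∑ i, ∑ j, c i j x * c i j y) * D y x)) :=
          Finset.sum_congr rfl fun x _ => Finset.sum_congr rfl fun y _ => e1 x y
      _ = -(1/2) * S + (1/4) * T := by
          rw [hSdef, hTdef]
          simp only [Finset.sum_add_distrib, Finset.mul_sum]
  rw [htr, hsplit, key]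
  ring
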